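/- Under the Setup with standing assumption (†) and optimality assumptions (O1)–(O2): if z is a solo vertex, y ∈ S_z* is a useful solo neighbor of z, and z is movable to the class β̃ for some β ∈ Φ, then the digraph H contains no directed path from β to f(y). -/

import Mathlib

open Finset

namespace EqListColoring

open scoped Classical

/-- `n mod* r` : the unique `i ∈ {1, …, r}` with `r ∣ n - i` (for `n, r ≥ 1`). -/
def modStar (n r : ℕ) : ℕ := if n % r = 0 then r else n % r

variable {V : Type*}

/-- `s = ⌈|V(G')|/r⌉ = ⌈(|V| - 1)/r⌉`, the maximum allowed class size. -/
noncomputable def sVal (V : Type*) [Fintype V] (r : ℕ) : ℕ :=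
  ⌈((Fintype.card V - 1 : ℕ) : ℚ) / r⌉₊

/-- The class `γ̃ = f⁻¹(γ)` of color `γ` in the coloring `f` of `G' = G - p`. -/
noncomputable def classOf [Fintype V] [DecidableEq V] (p : V) (f : V → ℕ) (γ : ℕ) : Finset V :=
  (Finset.univ.erase p).filter (fun v => f v = γ)

/-- `Γ`, the union of all lists. -/
noncomputable def colorSet [Fintype V] (L : V → Finset ℕ) : Finset ℕ :=
  Finset.univ.biUnion L

/-- `x` is movable to the class `γ̃`: `γ ∈ L(x)` and `x` has no neighbor in `γ̃`. -/
def MovableTo [Fintype V] [DecidableEq V] (G : SimpleGraph V) (L : V → Finset ℕ)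
    (p : V) (f : V → ℕ) (x : V) (γ : ℕ) : Prop :=
  γ ∈ L x ∧ ∀ y ∈ classOf p f γ, ¬ G.Adj x y

/-- The arcs of the auxiliary digraph `H` on the colors: `α → β` iff `α ≠ β` and
some vertex of the class `α̃` is movable to `β̃`. -/
def Arc [Fintype V] [DecidableEq V] (G : SimpleGraph V) (L : V → Finset ℕ)
    (p : V) (f : V → ℕ) (α β : ℕ) : Prop :=
  α ≠ β ∧ ∃ x ∈ classOf p f α, MovableTo G L p f x β

/-- A color `γ ∈ Γ` is accessible if `H` has a (possibly trivial) directed path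
from `γ` to a color of `Γ` whose class is light. -/
def Accessible [Fintype V] [DecidableEq V] (G : SimpleGraph V) (L : V → Finset ℕ)
    (p : V) (f : V → ℕ) (s γ : ℕ) : Prop :=
  γ ∈ colorSet L ∧ ∃ δ ∈ colorSet L,
    Relation.ReflTransGen (Arc G L p f) γ δ ∧ (classOf p f δ).card < s

/-- `Λ`, the set of accessible colors. -/
noncomputable def lamSet [Fintype V] [DecidableEq V] (G : SimpleGraph V) (L : V → Finset ℕ)
    (p : V) (f : V → ℕ) (s : ℕ) : Finset ℕ :=
  (colorSet L).filter (Accessible G L p f s)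

/-- `Φ = Γ ∖ Λ`, the set of inaccessible colors. -/
noncomputable def phiSet [Fintype V] [DecidableEq V] (G : SimpleGraph V) (L : V → Finset ℕ)
    (p : V) (f : V → ℕ) (s : ℕ) : Finset ℕ :=
  colorSet L \ lamSet G L p f s

/-- `A = ⋃_{λ ∈ Λ} λ̃`. -/
noncomputable def aSet [Fintype V] [DecidableEq V] (G : SimpleGraph V) (L : V → Finset ℕ)
    (p : V) (f : V → ℕ) (s : ℕ) : Finset V :=
  (lamSet G L p f s).biUnion (classOf p f)

/-- `B = ⋃_{φ ∈ Φ} φ̃`. -/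
noncomputable def bSet [Fintype V] [DecidableEq V] (G : SimpleGraph V) (L : V → Finset ℕ)
    (p : V) (f : V → ℕ) (s : ℕ) : Finset V :=
  (phiSet G L p f s).biUnion (classOf p f)

/-- `f` is a strongly equitable (SE) `L`-coloring of `G' = G - p`:
a proper coloring of `G - p` from the lists in which every class has size at most
`s = ⌈(|V|-1)/r⌉` and at most `(|V|-1) mod* r` classes have size exactly `s`. -/
def IsSE [Fintype V] [DecidableEq V] (G : SimpleGraph V) (r : ℕ) (L : V → Finset ℕ)
    (p : V) (f : V → ℕ) : Prop :=
  (∀ v, v ≠ p → f v ∈ L v) ∧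
  (∀ u v, u ≠ p → v ≠ p → G.Adj u v → f u ≠ f v) ∧
  (∀ γ : ℕ, (classOf p f γ).card ≤ sVal V r) ∧
  ((colorSet L).filter (fun γ => (classOf p f γ).card = sVal V r)).card
    ≤ modStar (Fintype.card V - 1) r

/-- The set-up of the proof of the main theorem: `r ≥ 9`, `G` is a graph in class ℬ
on at least two vertices with `Δ(G) ≤ r`, `L` is an `r`-list assignment for `G`,
`p` is a vertex of minimum degree, `f` is an SE `L`-coloring of `G' = G - p`, and
(†) `p` is not movable to the class of any accessible color. -/
structure Setup (V : Type*) [Fintype V] [DecidableEq V] where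
  G : SimpleGraph V
  r : ℕ
  L : V → Finset ℕ
  p : V
  f : V → ℕ
  hr : 9 ≤ r
  hB : ∀ X Y : Finset V, Disjoint X Y → 3 ≤ (X ∪ Y).card →
      ((X ×ˢ Y).filter (fun e => G.Adj e.1 e.2)).card ≤ 2 * (X ∪ Y).card - 4
  hΔ : ∀ v, (Finset.univ.filter (fun u => G.Adj v u)).card ≤ r
  hV : 2 ≤ Fintype.card V
  hL : ∀ v, (L v).card = r
  hpmin : ∀ v, (Finset.univ.filter (fun u => G.Adj p u)).card
      ≤ (Finset.univ.filter (fun u => G.Adj v u)).card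
  hSE : IsSE G r L p f
  hdagger : ∀ γ : ℕ, Accessible G L p f (sVal V r) γ → ¬ MovableTo G L p f p γ

namespace Setup

variable [Fintype V] [DecidableEq V] (S : Setup V)

/-- The maximum allowed class size `s`. -/
noncomputable def s : ℕ := sVal V S.r

/-- The class `γ̃` of a color `γ`. -/
noncomputable def cls (γ : ℕ) : Finset V := classOf S.p S.f γ

/-- The color set `Γ`. -/
noncomputable def Γ : Finset ℕ := colorSet S.L

/-- The set `Λ` of accessible colors. -/
noncomputable def Λ : Finset ℕ := lamSet S.G S.L S.p S.f S.s

/-- The set `Φ = Γ ∖ Λ` of inaccessible colors. -/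
noncomputable def Φ : Finset ℕ := phiSet S.G S.L S.p S.f S.s

/-- `b = |Φ|`. -/
noncomputable def b : ℕ := S.Φ.card

/-- `a = r - b`. -/
noncomputable def 𝒶 : ℕ := S.r - S.b

/-- `A = ⋃_{λ ∈ Λ} λ̃`. -/
noncomputable def A : Finset V := aSet S.G S.L S.p S.f S.s

/-- `B = ⋃_{φ ∈ Φ} φ̃`. -/
noncomputable def B : Finset V := bSet S.G S.L S.p S.f S.s

/-- `‖z, X‖`, the number of neighbors of `z` in `X`. -/
noncomputable def nbr (z : V) (X : Finset V) : ℕ := (X.filter (fun y => S.G.Adj z y)).card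

/-- `y` is a solo neighbor of `z`: `y` is adjacent to `z`, `f(z) ∈ L(y)` and `z` is
the unique neighbor of `y` in the class of `f(z)`. -/
def SoloNbr (z y : V) : Prop :=
  S.G.Adj z y ∧ S.f z ∈ S.L y ∧ ∀ w ∈ S.cls (S.f z), S.G.Adj y w → w = z

/-- `S_z`, the set of solo neighbors `y ∈ B` of `z`. -/
noncomputable def soloSet (z : V) : Finset V := S.B.filter (fun y => S.SoloNbr z y)

/-- `z ∈ A` is a solo vertex: `S_z ≠ ∅` and if some class of an accessible color is
full then that class is the class of `z`. -/
def SoloVertex (z : V) : Prop :=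
  z ∈ S.A ∧ (S.soloSet z).Nonempty ∧ ∀ γ ∈ S.Λ, (S.cls γ).card = S.s → γ = S.f z

/-- A solo neighbor `y ∈ S_z` is useful if it is nonadjacent to some other solo
neighbor of `z`. -/
def Useful (z y : V) : Prop := ∃ y' ∈ S.soloSet z, y' ≠ y ∧ ¬ S.G.Adj y y'

/-- `S_z*`, the set of useful solo neighbors of `z`. -/
noncomputable def soloStar (z : V) : Finset V := (S.soloSet z).filter (S.Useful z)

/-- (O1) : among all SE `L`-colorings of `G' = G - p`, `f` maximizes `|A|`. -/
def O1 : Prop :=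
  ∀ f' : V → ℕ, IsSE S.G S.r S.L S.p f' →
    (aSet S.G S.L S.p f' S.s).card ≤ S.A.card

/-- (O2) : subject to (O1), `f` maximizes the number of accessible colors with
nonempty classes. -/
def O2 : Prop :=
  ∀ f' : V → ℕ, IsSE S.G S.r S.L S.p f' →
    (aSet S.G S.L S.p f' S.s).card = S.A.card →
    ((lamSet S.G S.L S.p f' S.s).filter (fun γ => (classOf S.p f' γ).Nonempty)).card
      ≤ (S.Λ.filter (fun γ => (S.cls γ).Nonempty)).card

end Setup

set_option linter.unusedSectionVars false

section NodupChain

variable {α : Type*} {r : α → α → Prop}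

lemma chain_nodup_aux : ∀ (n : ℕ) (l : List α) (a b : α), l.length ≤ n →
    List.Chain r a l → (a :: l).getLast? = some b →
    ∃ m : List α, (∀ x ∈ m, x ∈ l) ∧ List.Chain r a m ∧
      (a :: m).getLast? = some b ∧ (a :: m).Nodup := by
  intro n
  induction n with
  | zero =>
    intro l a b hlen hch hlast
    have hl : l = [] := List.eq_nil_of_length_eq_zero (Nat.le_zero.mp hlen)
    subst hl
    exact ⟨[], by simp, List.Chain.nil, hlast, by simp⟩
  | succ n ih =>
    intro l a b hlen hch hlast
    by_cases ha : a ∈ l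
    · obtain ⟨l₁, l₂, rfl⟩ := List.append_of_mem ha
      have hch2 : List.Chain r a l₂ := List.IsChain.right_of_append (l₁ := a :: l₁) hch
      have hlast2 : (a :: l₂).getLast? = some b := by
        rw [show a :: (l₁ ++ a :: l₂) = (a :: l₁) ++ (a :: l₂) by simp] at hlast
        rwa [List.getLast?_append_of_ne_nil _ (by simp)] at hlast
      have hlen2 : l₂.length ≤ n := by
        simp only [List.length_append, List.length_cons] at hlen
        omega
      obtain ⟨m, hsub, h1, h2, h3⟩ := ih l₂ a b hlen2 hch2 hlast2
      exact ⟨m, fun x hx => by simp [hsub x hx], h1, h2, h3⟩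
    · match l, hch with
      | [], _ =>
        exact ⟨[], by simp, List.Chain.nil, hlast, by simp⟩
      | c :: l', hch0 =>
        have hac : r a c := List.rel_of_isChain_cons_cons hch0
        have hch' : List.Chain r c l' := List.IsChain.of_cons hch0
        have hlast' : (c :: l').getLast? = some b := by
          rwa [List.getLast?_cons_cons] at hlast
        have hlen' : l'.length ≤ n := by simp at hlen; omega
        obtain ⟨m, hsub, h1, h2, h3⟩ := ih l' c b hlen' hch' hlast'
        refine ⟨c :: m, ?_, List.Chain.cons hac h1, ?_, ?_⟩
        · intro x hx
          rcases List.mem_cons.mp hx with h | h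
          · simp [h]
          · simp [hsub x h]
        · rwa [List.getLast?_cons_cons]
        · refine List.nodup_cons.mpr ⟨?_, h3⟩
          intro hmem
          apply ha
          rcases List.mem_cons.mp hmem with h | h
          · simp [h]
          · simp [hsub a h]

lemma exists_nodup_chain_of_reflTransGen {a b : α} (h : Relation.ReflTransGen r a b) :
    ∃ m : List α, List.Chain r a m ∧ (a :: m).getLast? = some b ∧ (a :: m).Nodup := by
  obtain ⟨l, hch, hlast⟩ := List.exists_isChain_cons_of_relationReflTransGen h
  have hlast' : (a :: l).getLast? = some b := by
    rw [List.getLast?_eq_getLast (l := a :: l) (by simp), hlast]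
  obtain ⟨m, _, h1, h2, h3⟩ := chain_nodup_aux l.length l a b le_rfl hch hlast'
  exact ⟨m, h1, h2, h3⟩

end NodupChain

section Basic
variable [Fintype V] [DecidableEq V] {G : SimpleGraph V} {r : ℕ} {L : V → Finset ℕ}
  {p : V} {f : V → ℕ} {s : ℕ}

lemma mem_classOf {v : V} {γ : ℕ} : v ∈ classOf p f γ ↔ v ≠ p ∧ f v = γ := by
  simp [classOf]

lemma classOf_disjoint {γ δ : ℕ} (h : γ ≠ δ) :
    Disjoint (classOf p f γ) (classOf p f δ) := by
  rw [Finset.disjoint_left]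
  intro v hv hv'
  exact h ((mem_classOf.mp hv).2 ▸ (mem_classOf.mp hv').2.symm ▸ rfl)

lemma mem_colorSet_of_mem {v : V} {γ : ℕ} (h : γ ∈ L v) : γ ∈ colorSet L :=
  Finset.mem_biUnion.mpr ⟨v, Finset.mem_univ v, h⟩

lemma accessible_of_reflTransGen {γ δ : ℕ}
    (hγ : γ ∈ colorSet L) (hpath : Relation.ReflTransGen (Arc G L p f) γ δ)
    (hδ : Accessible G L p f s δ) : Accessible G L p f s γ := by
  obtain ⟨_, ε, hε, hp, hc⟩ := hδ
  exact ⟨hγ, ε, hε, hpath.trans hp, hc⟩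

lemma card_aSet_eq_sum :
    (aSet G L p f s).card = ∑ γ ∈ lamSet G L p f s, (classOf p f γ).card := by
  apply Finset.card_biUnion
  intro x _ y _ hxy
  exact classOf_disjoint hxy
end Basic

section Shift

variable [Fintype V] [DecidableEq V] {G : SimpleGraph V} {r : ℕ} {L : V → Finset ℕ}
  {p : V} {f : V → ℕ} {m : ℕ} {D E : ℕ → ℕ} {W : ℕ → V}

noncomputable def shiftFun (m : ℕ) (W : ℕ → V) (E : ℕ → ℕ) (f : V → ℕ) : V → ℕ := fun v =>
  if h : ∃ j, j ≤ m ∧ v = W j then E h.choose else f v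

variable (hm : 0 < m)
  (hD : ∀ i ≤ m, ∀ j ≤ m, D i = D j → i = j)
  (hW : ∀ j ≤ m, W j ∈ classOf p f (D j))
  (hDE : ∀ j < m, E j = D (j+1))
  (hEinj : ∀ i ≤ m, ∀ j ≤ m, E i = E j → i = j)

include hD hW in
lemma W_inj : ∀ i ≤ m, ∀ j ≤ m, W i = W j → i = j := by
  intro i hi j hj hij
  apply hD i hi j hj
  have h1 := (mem_classOf.mp (hW i hi)).2
  have h2 := (mem_classOf.mp (hW j hj)).2
  rw [← h1, ← h2, hij]

include hD hW in
lemma shiftFun_apply_W {j : ℕ} (hj : j ≤ m) : shiftFun m W E f (W j) = E j := by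
  have h : ∃ i, i ≤ m ∧ W j = W i := ⟨j, hj, rfl⟩
  rw [shiftFun, dif_pos h]
  obtain ⟨hi1, hi2⟩ := h.choose_spec
  rw [W_inj hD hW _ hi1 _ hj hi2.symm]

lemma shiftFun_apply_of {v : V} (hv : ∀ j ≤ m, v ≠ W j) : shiftFun m W E f v = f v := by
  rw [shiftFun, dif_neg]
  rintro ⟨j, hj, rfl⟩
  exact hv j hj rfl

include hm hD hDE hEinj in
lemma E_ne_D_self : ∀ j ≤ m, E j ≠ D j := by
  intro j hj hEq
  rcases Nat.lt_or_ge j m with h | h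
  · rw [hDE j h] at hEq
    have := hD (j+1) (by omega) j (by omega) hEq
    omega
  · have hjm : j = m := le_antisymm hj h
    have hd : E (m-1) = D m := by
      have := hDE (m-1) (by omega)
      rw [this]
      congr 1
      omega
    rw [hjm, ← hd] at hEq
    have := hEinj m le_rfl (m-1) (by omega) hEq
    omega

-- B1
include hD hW hDE hEinj in
lemma class'_untouched {c : ℕ} (hcD : ∀ j ≤ m, c ≠ D j) (hcE : ∀ j ≤ m, c ≠ E j) :
    classOf p (shiftFun m W E f) c = classOf p f c := by
  ext v
  simp only [mem_classOf]
  by_cases hv : ∃ j, j ≤ m ∧ v = W j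
  · obtain ⟨j, hj, rfl⟩ := hv
    rw [shiftFun_apply_W hD hW hj]
    have h1 := (mem_classOf.mp (hW j hj)).2
    constructor
    · rintro ⟨_, h⟩; exact absurd h.symm (hcE j hj)
    · rintro ⟨_, h⟩; rw [h1] at h; exact absurd h.symm (hcD j hj)
  · rw [shiftFun_apply_of (fun j hj hh => hv ⟨j, hj, hh⟩)]

-- B2
include hD hW hDE hEinj in
lemma class'_E_of_lt {j : ℕ} (hj : j < m) :
    classOf p (shiftFun m W E f) (E j) =
      insert (W j) ((classOf p f (D (j+1))).erase (W (j+1))) := by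
  ext v
  simp only [mem_classOf, Finset.mem_insert, Finset.mem_erase]
  constructor
  · rintro ⟨hvp, hval⟩
    by_cases hv : ∃ i, i ≤ m ∧ v = W i
    · obtain ⟨i, hi, rfl⟩ := hv
      rw [shiftFun_apply_W hD hW hi] at hval
      exact Or.inl (by rw [hEinj i hi j (le_of_lt hj) hval])
    · rw [shiftFun_apply_of (fun i hi hh => hv ⟨i, hi, hh⟩)] at hval
      refine Or.inr ⟨?_, hvp, by rw [hval, hDE j hj]⟩
      intro hvW
      apply hv
      exact ⟨j+1, by omega, hvW⟩
  · rintro (rfl | ⟨hne, hvp, hval⟩)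
    · refine ⟨(mem_classOf.mp (hW j (le_of_lt hj))).1, shiftFun_apply_W hD hW (le_of_lt hj)⟩
    · have hv : ∀ i ≤ m, v ≠ W i := by
        intro i hi hvW
        have : D i = D (j+1) := by
          rw [← (mem_classOf.mp (hW i hi)).2, ← hvW, hval]
        have := hD i hi (j+1) (by omega) this
        exact hne (by rw [hvW, this])
      rw [shiftFun_apply_of hv]
      exact ⟨hvp, by rw [hval, hDE j hj]⟩

-- B3 cycle
include hm hD hW hDE hEinj in
lemma class'_E_m_cyc (hc : E m = D 0) :
    classOf p (shiftFun m W E f) (E m) =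
      insert (W m) ((classOf p f (D 0)).erase (W 0)) := by
  ext v
  simp only [mem_classOf, Finset.mem_insert, Finset.mem_erase]
  constructor
  · rintro ⟨hvp, hval⟩
    by_cases hv : ∃ i, i ≤ m ∧ v = W i
    · obtain ⟨i, hi, rfl⟩ := hv
      rw [shiftFun_apply_W hD hW hi] at hval
      exact Or.inl (by rw [hEinj i hi m le_rfl hval])
    · rw [shiftFun_apply_of (fun i hi hh => hv ⟨i, hi, hh⟩)] at hval
      refine Or.inr ⟨?_, hvp, by rw [hval, hc]⟩
      intro hvW
      exact hv ⟨0, by omega, hvW⟩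
  · rintro (rfl | ⟨hne, hvp, hval⟩)
    · exact ⟨(mem_classOf.mp (hW m le_rfl)).1, shiftFun_apply_W hD hW le_rfl⟩
    · have hv : ∀ i ≤ m, v ≠ W i := by
        intro i hi hvW
        have : D i = D 0 := by
          rw [← (mem_classOf.mp (hW i hi)).2, ← hvW, hval]
        have := hD i hi 0 (by omega) this
        exact hne (by rw [hvW, this])
      rw [shiftFun_apply_of hv]
      exact ⟨hvp, by rw [hval, hc]⟩

-- B3 path
include hm hD hW hDE hEinj in
lemma class'_E_m_path (hc : ∀ j ≤ m, E m ≠ D j) :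
    classOf p (shiftFun m W E f) (E m) = insert (W m) (classOf p f (E m)) := by
  ext v
  simp only [mem_classOf, Finset.mem_insert]
  constructor
  · rintro ⟨hvp, hval⟩
    by_cases hv : ∃ i, i ≤ m ∧ v = W i
    · obtain ⟨i, hi, rfl⟩ := hv
      rw [shiftFun_apply_W hD hW hi] at hval
      exact Or.inl (by rw [hEinj i hi m le_rfl hval])
    · rw [shiftFun_apply_of (fun i hi hh => hv ⟨i, hi, hh⟩)] at hval
      exact Or.inr ⟨hvp, hval⟩
  · rintro (rfl | ⟨hvp, hval⟩)
    · exact ⟨(mem_classOf.mp (hW m le_rfl)).1, shiftFun_apply_W hD hW le_rfl⟩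
    · have hv : ∀ i ≤ m, v ≠ W i := by
        intro i hi hvW
        apply hc i hi
        rw [← (mem_classOf.mp (hW i hi)).2, ← hvW, hval]
      rw [shiftFun_apply_of hv]
      exact ⟨hvp, hval⟩

include hm hD hW hDE hEinj in
lemma class'_D_0_path (hc : ∀ j ≤ m, E m ≠ D j) :
    classOf p (shiftFun m W E f) (D 0) = (classOf p f (D 0)).erase (W 0) := by
  ext v
  simp only [mem_classOf, Finset.mem_erase]
  constructor
  · rintro ⟨hvp, hval⟩
    by_cases hv : ∃ i, i ≤ m ∧ v = W i
    · obtain ⟨i, hi, rfl⟩ := hv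
      rw [shiftFun_apply_W hD hW hi] at hval
      exfalso
      rcases Nat.lt_or_ge i m with h | h
      · rw [hDE i h] at hval
        have := hD (i+1) (by omega) 0 (by omega) hval
        omega
      · have : i = m := le_antisymm hi h
        subst this
        exact hc 0 (by omega) hval
    · rw [shiftFun_apply_of (fun i hi hh => hv ⟨i, hi, hh⟩)] at hval
      refine ⟨?_, hvp, hval⟩
      intro hvW
      exact hv ⟨0, by omega, hvW⟩
  · rintro ⟨hne, hvp, hval⟩
    have hv : ∀ i ≤ m, v ≠ W i := by
      intro i hi hvW
      have : D i = D 0 := by rw [← (mem_classOf.mp (hW i hi)).2, ← hvW, hval]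
      have := hD i hi 0 (by omega) this
      exact hne (by rw [hvW, this])
    rw [shiftFun_apply_of hv]
    exact ⟨hvp, hval⟩

variable (hSE : IsSE G r L p f)
  (hLW : ∀ j ≤ m, E j ∈ L (W j))
  (hNbr : ∀ j ≤ m, ∀ w ∈ classOf p f (E j), (∀ i ≤ m, w ≠ W i) → ¬ G.Adj (W j) w)

include hm hD hW hDE hEinj in
lemma card_class'_cyc (hc : E m = D 0) (c : ℕ) :
    (classOf p (shiftFun m W E f) c).card = (classOf p f c).card := by
  by_cases hcE : ∃ j, j ≤ m ∧ c = E j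
  · obtain ⟨j, hj, rfl⟩ := hcE
    rcases Nat.lt_or_ge j m with h | h
    · rw [class'_E_of_lt hD hW hDE hEinj h, hDE j h]
      rw [Finset.card_insert_of_notMem, Finset.card_erase_of_mem (hW (j+1) (by omega))]
      · have hpos : 0 < (classOf p f (D (j+1))).card :=
          Finset.card_pos.mpr ⟨W (j+1), hW (j+1) (by omega)⟩
        omega
      · intro hmem
        have h2 := (Finset.mem_erase.mp hmem).2
        have h3 : f (W j) = D (j+1) := (mem_classOf.mp h2).2
        have h4 : f (W j) = D j := (mem_classOf.mp (hW j (by omega))).2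
        have := hD (j+1) (by omega) j (by omega) (by rw [← h3, h4])
        omega
    · have hjm : j = m := le_antisymm hj h
      rw [hjm, class'_E_m_cyc hm hD hW hDE hEinj hc, hc]
      rw [Finset.card_insert_of_notMem, Finset.card_erase_of_mem (hW 0 (by omega))]
      · have hpos : 0 < (classOf p f (D 0)).card :=
          Finset.card_pos.mpr ⟨W 0, hW 0 (by omega)⟩
        omega
      · intro hmem
        have h2 := (Finset.mem_erase.mp hmem).2
        have h3 : f (W m) = D 0 := (mem_classOf.mp h2).2
        have h4 : f (W m) = D m := (mem_classOf.mp (hW m le_rfl)).2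
        have := hD 0 (by omega) m le_rfl (by rw [← h3, h4])
        omega
  · have hcD : ∀ j ≤ m, c ≠ D j := by
      intro j hj hEq
      apply hcE
      rcases Nat.eq_zero_or_pos j with rfl | hpos
      · exact ⟨m, le_rfl, by rw [hEq, hc]⟩
      · refine ⟨j-1, by omega, ?_⟩
        rw [hEq, hDE (j-1) (by omega)]
        congr 1
        omega
    rw [class'_untouched hD hW hDE hEinj hcD (fun j hj hEq => hcE ⟨j, hj, hEq⟩)]

include hm hD hW hDE hEinj in
lemma card_class'_path_other (hc : ∀ j ≤ m, E m ≠ D j) {c : ℕ}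
    (h0 : c ≠ D 0) (hmm : c ≠ E m) :
    (classOf p (shiftFun m W E f) c).card = (classOf p f c).card := by
  by_cases hcE : ∃ j, j ≤ m ∧ c = E j
  · obtain ⟨j, hj, rfl⟩ := hcE
    have h : j < m := by
      rcases Nat.lt_or_ge j m with h | h
      · exact h
      · exact absurd (by rw [le_antisymm hj h]) hmm
    rw [class'_E_of_lt hD hW hDE hEinj h, hDE j h]
    rw [Finset.card_insert_of_notMem, Finset.card_erase_of_mem (hW (j+1) (by omega))]
    · have hpos : 0 < (classOf p f (D (j+1))).card :=
        Finset.card_pos.mpr ⟨W (j+1), hW (j+1) (by omega)⟩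
      omega
    · intro hmem
      have h2 := (Finset.mem_erase.mp hmem).2
      have h3 : f (W j) = D (j+1) := (mem_classOf.mp h2).2
      have h4 : f (W j) = D j := (mem_classOf.mp (hW j (by omega))).2
      have := hD (j+1) (by omega) j (by omega) (by rw [← h3, h4])
      omega
  · have hcD : ∀ j ≤ m, c ≠ D j := by
      intro j hj hEq
      rcases Nat.eq_zero_or_pos j with rfl | hpos
      · exact h0 hEq
      · refine hcE ⟨j-1, by omega, ?_⟩
        rw [hEq, hDE (j-1) (by omega)]
        congr 1
        omega
    rw [class'_untouched hD hW hDE hEinj hcD (fun j hj hEq => hcE ⟨j, hj, hEq⟩)]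

include hm hD hW hDE hEinj in
lemma card_class'_path_D0 (hc : ∀ j ≤ m, E m ≠ D j) :
    (classOf p (shiftFun m W E f) (D 0)).card = (classOf p f (D 0)).card - 1 := by
  rw [class'_D_0_path hm hD hW hDE hEinj hc, Finset.card_erase_of_mem (hW 0 (by omega))]

include hm hD hW hDE hEinj in
lemma card_class'_path_Em (hc : ∀ j ≤ m, E m ≠ D j) :
    (classOf p (shiftFun m W E f) (E m)).card = (classOf p f (E m)).card + 1 := by
  rw [class'_E_m_path hm hD hW hDE hEinj hc, Finset.card_insert_of_notMem]
  intro hmem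
  have h3 : f (W m) = E m := (mem_classOf.mp hmem).2
  have h4 : f (W m) = D m := (mem_classOf.mp (hW m le_rfl)).2
  exact hc m le_rfl (by rw [← h3, h4])

include hD hW hEinj hSE hNbr in
lemma shiftFun_proper : ∀ u v, u ≠ p → v ≠ p → G.Adj u v →
    shiftFun m W E f u ≠ shiftFun m W E f v := by
  intro u v hu hv hadj heq
  by_cases hu' : ∃ i, i ≤ m ∧ u = W i
  · obtain ⟨i, hi, rfl⟩ := hu'
    by_cases hv' : ∃ j, j ≤ m ∧ v = W j
    · obtain ⟨j, hj, rfl⟩ := hv'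
      rw [shiftFun_apply_W hD hW hi, shiftFun_apply_W hD hW hj] at heq
      have := hEinj i hi j hj heq
      subst this
      exact G.irrefl hadj
    · have hv'' : ∀ j ≤ m, v ≠ W j := fun j hj hh => hv' ⟨j, hj, hh⟩
      rw [shiftFun_apply_W hD hW hi, shiftFun_apply_of hv''] at heq
      have hvmem : v ∈ classOf p f (E i) := mem_classOf.mpr ⟨hv, heq.symm⟩
      exact hNbr i hi v hvmem hv'' hadj
  · have hu'' : ∀ j ≤ m, u ≠ W j := fun j hj hh => hu' ⟨j, hj, hh⟩
    by_cases hv' : ∃ j, j ≤ m ∧ v = W j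
    · obtain ⟨j, hj, rfl⟩ := hv'
      rw [shiftFun_apply_of hu'', shiftFun_apply_W hD hW hj] at heq
      have humem : u ∈ classOf p f (E j) := mem_classOf.mpr ⟨hu, heq⟩
      exact hNbr j hj u humem hu'' hadj.symm
    · have hv'' : ∀ j ≤ m, v ≠ W j := fun j hj hh => hv' ⟨j, hj, hh⟩
      rw [shiftFun_apply_of hu'', shiftFun_apply_of hv''] at heq
      exact hSE.2.1 u v hu hv hadj heq

include hD hW hSE hLW in
lemma shiftFun_lists : ∀ v, v ≠ p → shiftFun m W E f v ∈ L v := by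
  intro v hv
  by_cases hv' : ∃ j, j ≤ m ∧ v = W j
  · obtain ⟨j, hj, rfl⟩ := hv'
    rw [shiftFun_apply_W hD hW hj]
    exact hLW j hj
  · rw [shiftFun_apply_of (fun j hj hh => hv' ⟨j, hj, hh⟩)]
    exact hSE.1 v hv

include hm hD hW hDE hEinj hSE hLW hNbr in
lemma isSE_shift_cyc (hc : E m = D 0) : IsSE G r L p (shiftFun m W E f) := by
  refine ⟨shiftFun_lists hD hW hSE hLW, shiftFun_proper hD hW hEinj hSE hNbr, ?_, ?_⟩
  · intro γ
    rw [card_class'_cyc hm hD hW hDE hEinj hc γ]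
    exact hSE.2.2.1 γ
  · have heqf : (colorSet L).filter
        (fun γ => (classOf p (shiftFun m W E f) γ).card = sVal V r) =
        (colorSet L).filter (fun γ => (classOf p f γ).card = sVal V r) := by
      apply Finset.filter_congr
      intro γ _
      rw [card_class'_cyc hm hD hW hDE hEinj hc γ]
    rw [heqf]
    exact hSE.2.2.2

include hm hD hW hDE hEinj hSE hLW hNbr in
lemma isSE_shift_path (hc : ∀ j ≤ m, E m ≠ D j)
    (hfull : (classOf p f (D 0)).card = sVal V r)
    (hlight : (classOf p f (E m)).card < sVal V r)
    (hΓ0 : D 0 ∈ colorSet L) : IsSE G r L p (shiftFun m W E f) := by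
  refine ⟨shiftFun_lists hD hW hSE hLW, shiftFun_proper hD hW hEinj hSE hNbr, ?_, ?_⟩
  · intro γ
    by_cases h1 : γ = E m
    · subst h1
      rw [card_class'_path_Em hm hD hW hDE hEinj hc]
      omega
    by_cases h2 : γ = D 0
    · subst h2
      rw [card_class'_path_D0 hm hD hW hDE hEinj hc]
      have := hSE.2.2.1 (D 0)
      omega
    · rw [card_class'_path_other hm hD hW hDE hEinj hc h2 h1]
      exact hSE.2.2.1 γ
  · have hD0mem : D 0 ∈ (colorSet L).filter (fun γ => (classOf p f γ).card = sVal V r) :=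
      Finset.mem_filter.mpr ⟨hΓ0, hfull⟩
    have hs1 : 1 ≤ sVal V r := by
      rw [← hfull]
      exact Finset.card_pos.mpr ⟨W 0, hW 0 (by omega)⟩
    have hsub : (colorSet L).filter
        (fun γ => (classOf p (shiftFun m W E f) γ).card = sVal V r) ⊆
        insert (E m) (((colorSet L).filter
          (fun γ => (classOf p f γ).card = sVal V r)).erase (D 0)) := by
      intro γ hγ
      obtain ⟨hγΓ, hγc⟩ := Finset.mem_filter.mp hγ
      by_cases h1 : γ = E m
      · exact h1 ▸ Finset.mem_insert_self _ _
      by_cases h2 : γ = D 0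
      · exfalso
        subst h2
        rw [card_class'_path_D0 hm hD hW hDE hEinj hc, hfull] at hγc
        omega
      · refine Finset.mem_insert.mpr (Or.inr (Finset.mem_erase.mpr ⟨h2, ?_⟩))
        refine Finset.mem_filter.mpr ⟨hγΓ, ?_⟩
        rw [← card_class'_path_other hm hD hW hDE hEinj hc h2 h1]
        exact hγc
    calc ((colorSet L).filter
        (fun γ => (classOf p (shiftFun m W E f) γ).card = sVal V r)).card
        ≤ _ := Finset.card_le_card hsub
      _ ≤ (((colorSet L).filter
          (fun γ => (classOf p f γ).card = sVal V r)).erase (D 0)).card + 1 :=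
        Finset.card_insert_le _ _
      _ = ((colorSet L).filter
          (fun γ => (classOf p f γ).card = sVal V r)).card - 1 + 1 := by
        rw [Finset.card_erase_of_mem hD0mem]
      _ ≤ ((colorSet L).filter (fun γ => (classOf p f γ).card = sVal V r)).card := by
        have : 0 < ((colorSet L).filter
            (fun γ => (classOf p f γ).card = sVal V r)).card :=
          Finset.card_pos.mpr ⟨D 0, hD0mem⟩
        omega
      _ ≤ modStar (Fintype.card V - 1) r := hSE.2.2.2

include hm hD hW hDE hEinj hSE hNbr in
lemma arc_shift_path (hc : ∀ j ≤ m, E m ≠ D j)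
    (hWadj : ∀ j, 1 ≤ j → j < m → ¬ G.Adj (W j) (W (j-1))) :
    ∀ j < m, Arc G L p (shiftFun m W E f) (E j) (D j) := by
  intro j hj
  refine ⟨E_ne_D_self hm hD hDE hEinj j (le_of_lt hj), W j, ?_, ?_, ?_⟩
  · rw [class'_E_of_lt hD hW hDE hEinj hj]
    exact Finset.mem_insert_self _ _
  · have h1 : f (W j) = D j := (mem_classOf.mp (hW j (le_of_lt hj))).2
    rw [← h1]
    exact hSE.1 (W j) (mem_classOf.mp (hW j (le_of_lt hj))).1
  · intro w hw
    rcases Nat.eq_zero_or_pos j with rfl | hpos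
    · rw [class'_D_0_path hm hD hW hDE hEinj hc] at hw
      obtain ⟨hwne, hwcls⟩ := Finset.mem_erase.mp hw
      intro hadj
      exact hSE.2.1 (W 0) w (mem_classOf.mp (hW 0 (by omega))).1 (mem_classOf.mp hwcls).1 hadj
        (by rw [(mem_classOf.mp (hW 0 (by omega))).2, (mem_classOf.mp hwcls).2])
    · have hD_eq : D j = E (j-1) := by
        rw [hDE (j-1) (by omega)]
        congr 1
        omega
      have hj1 : (j-1)+1 = j := by omega
      rw [hD_eq, class'_E_of_lt hD hW hDE hEinj (show j-1 < m by omega), hj1] at hw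
      rcases Finset.mem_insert.mp hw with rfl | hw2
      · exact fun hadj => hWadj j hpos hj hadj
      · obtain ⟨hwne, hwcls⟩ := Finset.mem_erase.mp hw2
        intro hadj
        exact hSE.2.1 (W j) w (mem_classOf.mp (hW j (le_of_lt hj))).1
          (mem_classOf.mp hwcls).1 hadj
          (by rw [(mem_classOf.mp (hW j (le_of_lt hj))).2, (mem_classOf.mp hwcls).2])

include hm hD hW hDE hEinj hSE in
lemma arc_shift_path_last (hc : ∀ j ≤ m, E m ≠ D j)
    (hL0 : D 0 ∈ L (W m)) (hadj0 : ∀ w ∈ classOf p f (D 0), ¬ G.Adj (W m) w) :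
    Arc G L p (shiftFun m W E f) (E m) (D 0) := by
  refine ⟨hc 0 (by omega), W m, ?_, hL0, ?_⟩
  · rw [class'_E_m_path hm hD hW hDE hEinj hc]
    exact Finset.mem_insert_self _ _
  · intro w hw
    rw [class'_D_0_path hm hD hW hDE hEinj hc] at hw
    exact hadj0 w (Finset.mem_erase.mp hw).2

end Shift

/-- Lemma 7 (under the Setup, (†), (O1) and (O2)): if `z` is a solo vertex,
`y ∈ S_z*` is a useful solo neighbor of `z` and `z` is movable to the class `β̃`
for some `β ∈ Φ`, then the digraph `H` has no directed path from `β` to `f(y)`. -/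
theorem lemma_S_star_cap_D {V : Type*} [Fintype V] [DecidableEq V] (S : Setup V)
    (hO1 : S.O1) (hO2 : S.O2) (z y : V) (hz : S.SoloVertex z)
    (hy : y ∈ S.soloStar z) (β : ℕ) (hβ : β ∈ S.Φ)
    (hmov : MovableTo S.G S.L S.p S.f z β) :
    ¬ Relation.ReflTransGen (Arc S.G S.L S.p S.f) β (S.f y) := by
  intro hpath
  obtain ⟨hzA, hzsoloNE, hzfull⟩ := hz
  -- basic unfolding of membership facts
  have hβ' : β ∈ colorSet S.L ∧ β ∉ lamSet S.G S.L S.p S.f S.s := Finset.mem_sdiff.mp hβ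
  have hβΓ : β ∈ colorSet S.L := hβ'.1
  have hnaccβ : ¬ Accessible S.G S.L S.p S.f S.s β := fun h =>
    hβ'.2 (Finset.mem_filter.mpr ⟨hβΓ, h⟩)
  obtain ⟨lam, hlamΛ, hzcls⟩ := Finset.mem_biUnion.mp hzA
  have hzp : z ≠ S.p := (mem_classOf.mp hzcls).1
  have hfzΛ : S.f z ∈ lamSet S.G S.L S.p S.f S.s := by
    rw [(mem_classOf.mp hzcls).2]; exact hlamΛ
  have hfzacc : Accessible S.G S.L S.p S.f S.s (S.f z) := (Finset.mem_filter.mp hfzΛ).2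
  have hfzΓ : S.f z ∈ colorSet S.L := (Finset.mem_filter.mp hfzΛ).1
  have hzclsfz : z ∈ classOf S.p S.f (S.f z) := mem_classOf.mpr ⟨hzp, rfl⟩
  -- facts about y
  have hy' := Finset.mem_filter.mp hy
  have hysolo : y ∈ S.soloSet z := hy'.1
  obtain ⟨y', hy'solo, hy'ne, hy'nadj⟩ := hy'.2
  have hysolo' := Finset.mem_filter.mp hysolo
  have hySN : S.SoloNbr z y := hysolo'.2
  obtain ⟨hadjzy, hfzLy, hsoloy⟩ := hySN
  obtain ⟨φy, hφy, hycls⟩ := Finset.mem_biUnion.mp hysolo'.1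
  have hyp : y ≠ S.p := (mem_classOf.mp hycls).1
  have hfyΦ : S.f y ∈ phiSet S.G S.L S.p S.f S.s := by
    rw [(mem_classOf.mp hycls).2]; exact hφy
  -- facts about y'
  have hy'solo' := Finset.mem_filter.mp hy'solo
  obtain ⟨hadjzy', hfzLy', hsoloy'⟩ := hy'solo'.2
  obtain ⟨φ', hφ', hy'cls⟩ := Finset.mem_biUnion.mp hy'solo'.1
  have hy'p : y' ≠ S.p := (mem_classOf.mp hy'cls).1
  have hfy'Φ : S.f y' ∈ phiSet S.G S.L S.p S.f S.s := by
    rw [(mem_classOf.mp hy'cls).2]; exact hφ'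
  have hzy : z ≠ y := SimpleGraph.Adj.ne hadjzy
  have hzy' : z ≠ y' := SimpleGraph.Adj.ne hadjzy'
  -- every inaccessible class is full
  have hfull_phi : ∀ φ ∈ phiSet S.G S.L S.p S.f S.s, (classOf S.p S.f φ).card = S.s := by
    intro φ hφ
    obtain ⟨hφΓ, hφn⟩ := Finset.mem_sdiff.mp hφ
    rcases Nat.lt_or_ge (classOf S.p S.f φ).card S.s with h | h
    · exact absurd (Finset.mem_filter.mpr
        ⟨hφΓ, hφΓ, φ, hφΓ, Relation.ReflTransGen.refl, h⟩) hφn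
    · exact le_antisymm (S.hSE.2.2.1 φ) h
  -- every accessible class except that of z is light
  have hlight_lam : ∀ lam ∈ lamSet S.G S.L S.p S.f S.s, lam ≠ S.f z →
      (classOf S.p S.f lam).card < S.s := by
    intro lam hlam hne
    rcases Nat.lt_or_ge (classOf S.p S.f lam).card S.s with h | h
    · exact h
    · exact absurd (hzfull lam hlam (le_antisymm (S.hSE.2.2.1 lam) h)) hne
  have hfzβ : S.f z ≠ β := fun h => hβ'.2 (h ▸ hfzΛ)
  have hβfull : (classOf S.p S.f β).card = S.s := hfull_phi β hβ
  have hs1 : 1 ≤ S.s := by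
    rw [← hfull_phi _ hfyΦ]
    exact Finset.card_pos.mpr ⟨y, mem_classOf.mpr ⟨hyp, rfl⟩⟩
  -- extract a nodup chain of colors from β to f y
  obtain ⟨l, hchain, hlast, hnodup⟩ := exists_nodup_chain_of_reflTransGen hpath
  set Lst : List ℕ := β :: l with hLst
  set k := l.length with hk
  have hLstlen : Lst.length = k + 1 := by simp [hLst, hk]
  set c : ℕ → ℕ := fun i => Lst.getD i 0 with hc
  have hc0 : c 0 = β := by simp [hc, hLst]
  have hcget : ∀ i, i ≤ k → ∀ (h : i < Lst.length), c i = Lst.get ⟨i, h⟩ := by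
    intro i hi h
    exact List.getD_eq_get Lst 0 ⟨i, h⟩
  have hck : c k = S.f y := by
    have h1 : Lst.getLast (by simp [hLst]) = S.f y := by
      rw [List.getLast?_eq_getLast (l := Lst) (by simp [hLst])] at hlast
      exact Option.some_injective _ hlast
    rw [List.getLast_eq_getElem] at h1
    rw [hcget k le_rfl (by omega)]
    exact h1
  have hchain' : Lst.Chain' (Arc S.G S.L S.p S.f) := hchain
  have harc : ∀ j, j < k → Arc S.G S.L S.p S.f (c j) (c (j+1)) := by
    intro j hj
    have h := List.isChain_iff_getElem.mp hchain' j (by omega)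
    rw [hcget j (by omega) (by omega), hcget (j+1) (by omega) (by omega)]
    exact h
  have hcinj : ∀ i ≤ k, ∀ j ≤ k, c i = c j → i = j := by
    intro i hi j hj hij
    have hinj := List.nodup_iff_injective_get.mp hnodup
    rw [hcget i hi (by omega), hcget j hj (by omega)] at hij
    have := hinj hij
    exact Fin.mk.injEq _ _ _ _ ▸ (by injection this)
  have hprefix : ∀ j, j ≤ k → Relation.ReflTransGen (Arc S.G S.L S.p S.f) β (c j) := by
    intro j
    induction j with
    | zero => intro _; rw [hc0]
    | succ n ih =>
      intro hn
      exact Relation.ReflTransGen.tail (ih (by omega)) (harc n (by omega))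
  have hcΓ : ∀ j, j ≤ k → c j ∈ colorSet S.L := by
    intro j hj
    match j with
    | 0 => rw [hc0]; exact hβΓ
    | n+1 =>
      obtain ⟨_, x, _, hmv⟩ := harc n (by omega)
      exact mem_colorSet_of_mem hmv.1
  have hcnacc : ∀ j, j ≤ k → ¬ Accessible S.G S.L S.p S.f S.s (c j) := by
    intro j hj hacc
    exact hnaccβ (accessible_of_reflTransGen hβΓ (hprefix j hj) hacc)
  have hcnlam : ∀ j, j ≤ k → c j ∉ lamSet S.G S.L S.p S.f S.s := by
    intro j hj h
    exact hcnacc j hj (Finset.mem_filter.mp h).2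
  have hcnefz : ∀ j, j ≤ k → c j ≠ S.f z := by
    intro j hj h
    exact hcnacc j hj (h ▸ hfzacc)
  -- choose the witnesses along the chain
  have hXex : ∀ j, ∃ x : V, j < k →
      x ∈ classOf S.p S.f (c j) ∧ MovableTo S.G S.L S.p S.f x (c (j+1)) := by
    intro j
    by_cases hj : j < k
    · obtain ⟨_, x, hx1, hx2⟩ := harc j hj
      exact ⟨x, fun _ => ⟨hx1, hx2⟩⟩
    · exact ⟨z, fun h => absurd h hj⟩
  choose X hX using hXex
  have hXcls : ∀ j, j < k → X j ∈ classOf S.p S.f (c j) := fun j hj => (hX j hj).1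
  have hXmov : ∀ j, j < k → MovableTo S.G S.L S.p S.f (X j) (c (j+1)) := fun j hj => (hX j hj).2

  by_cases hA : ∃ μ, μ ∈ lamSet S.G S.L S.p S.f S.s ∧ μ ≠ S.f z ∧
      MovableTo S.G S.L S.p S.f z μ
  · -- Case A : z is movable to a light accessible class μ
    obtain ⟨μ, hμΛ, hμfz, hμmov⟩ := hA
    have hμΓ : μ ∈ colorSet S.L := (Finset.mem_filter.mp hμΛ).1
    have hμlight : (classOf S.p S.f μ).card < S.s := hlight_lam μ hμΛ hμfz
    obtain ⟨D, W, E, hDval_le, hDval_m, hEval_lt, hEval_m, hWval_lt, hWval_k, hWval_m⟩ :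
        ∃ (D : ℕ → ℕ) (W : ℕ → V) (E : ℕ → ℕ),
          (∀ j, j ≤ k → D j = c j) ∧ D (k+1) = S.f z ∧
          (∀ j, j < k+1 → E j = D (j+1)) ∧ E (k+1) = μ ∧
          (∀ j, j < k → W j = X j) ∧ W k = y ∧ W (k+1) = z := by
      refine ⟨fun j => if j = k+1 then S.f z else c j,
        fun j => if j = k+1 then z else if j = k then y else X j,
        fun j => if j = k+1 then μ else if j = k then S.f z else c (j+1),
        fun j hj => if_neg (by omega),
        if_pos rfl, ?_,
        if_pos rfl,
        fun j hj => (if_neg (by omega)).trans (if_neg (by omega)),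
        (if_neg (by omega)).trans (if_pos rfl),
        if_pos rfl⟩
      intro j hj
      by_cases hjk : j = k
      · subst hjk
        exact ((if_neg (by omega)).trans (if_pos rfl)).trans (if_pos rfl).symm
      · exact ((if_neg (by omega)).trans (if_neg hjk)).trans
          (if_neg (show ¬(j+1 = k+1) by omega)).symm
    have hDinj : ∀ i ≤ k+1, ∀ j ≤ k+1, D i = D j → i = j := by
      intro i hi j hj hij
      by_cases h1 : i = k+1 <;> by_cases h2 : j = k+1
      · omega
      · subst h1
        rw [hDval_m, hDval_le j (by omega)] at hij
        exact absurd hij.symm (hcnefz j (by omega))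
      · subst h2
        rw [hDval_m, hDval_le i (by omega)] at hij
        exact absurd hij (hcnefz i (by omega))
      · rw [hDval_le i (by omega), hDval_le j (by omega)] at hij
        exact hcinj i (by omega) j (by omega) hij
    have hWmem : ∀ j ≤ k+1, W j ∈ classOf S.p S.f (D j) := by
      intro j hj
      by_cases h1 : j = k+1
      · subst h1
        rw [hWval_m, hDval_m]
        exact hzclsfz
      by_cases h2 : j = k
      · subst h2
        rw [hWval_k, hDval_le k le_rfl, hck]
        exact mem_classOf.mpr ⟨hyp, rfl⟩
      · rw [hWval_lt j (by omega), hDval_le j (by omega)]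
        exact hXcls j (by omega)
    have hEinjh : ∀ i ≤ k+1, ∀ j ≤ k+1, E i = E j → i = j := by
      intro i hi j hj hij
      by_cases h1 : i = k+1 <;> by_cases h2 : j = k+1
      · omega
      · subst h1
        rw [hEval_m, hEval_lt j (by omega)] at hij
        by_cases h3 : j+1 = k+1
        · rw [h3, hDval_m] at hij
          exact absurd hij hμfz
        · rw [hDval_le (j+1) (by omega)] at hij
          exact absurd (hij ▸ hμΛ) (hcnlam (j+1) (by omega))
      · subst h2
        rw [hEval_m, hEval_lt i (by omega)] at hij
        by_cases h3 : i+1 = k+1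
        · rw [h3, hDval_m] at hij
          exact absurd hij.symm hμfz
        · rw [hDval_le (i+1) (by omega)] at hij
          exact absurd (hij.symm ▸ hμΛ) (hcnlam (i+1) (by omega))
      · rw [hEval_lt i (by omega), hEval_lt j (by omega)] at hij
        have := hDinj (i+1) (by omega) (j+1) (by omega) hij
        omega
    have hEmD : ∀ j ≤ k+1, E (k+1) ≠ D j := by
      intro j hj h
      rw [hEval_m] at h
      by_cases hjm : j = k+1
      · subst hjm
        rw [hDval_m] at h
        exact hμfz h
      · rw [hDval_le j (by omega)] at h
        exact (hcnlam j (by omega)) (h ▸ hμΛ)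
    have hLWh : ∀ j ≤ k+1, E j ∈ S.L (W j) := by
      intro j hj
      by_cases h1 : j = k+1
      · subst h1
        rw [hEval_m, hWval_m]
        exact hμmov.1
      by_cases h2 : j = k
      · subst h2
        rw [hEval_lt k (by omega), hDval_m, hWval_k]
        exact hfzLy
      · rw [hEval_lt j (by omega), hDval_le (j+1) (by omega), hWval_lt j (by omega)]
        exact (hXmov j (by omega)).1
    have hNbrh : ∀ j ≤ k+1, ∀ w ∈ classOf S.p S.f (E j),
        (∀ i ≤ k+1, w ≠ W i) → ¬ S.G.Adj (W j) w := by
      intro j hj w hw hwW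
      by_cases h1 : j = k+1
      · subst h1
        rw [hEval_m] at hw
        rw [hWval_m]
        exact hμmov.2 w hw
      by_cases h2 : j = k
      · subst h2
        rw [hEval_lt k (by omega), hDval_m] at hw
        rw [hWval_k]
        intro hadj
        exact (hwW (k+1) le_rfl) (by rw [hWval_m]; exact hsoloy w hw hadj)
      · rw [hEval_lt j (by omega), hDval_le (j+1) (by omega)] at hw
        rw [hWval_lt j (by omega)]
        exact (hXmov j (by omega)).2 w hw
    have hm1 : 0 < k + 1 := by omega
    have hfullD0 : (classOf S.p S.f (D 0)).card = sVal V S.r := by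
      rw [hDval_le 0 (by omega), hc0]
      exact hβfull
    have hlightEm : (classOf S.p S.f (E (k+1))).card < sVal V S.r := by
      rw [hEval_m]
      exact hμlight
    have hD0Γ : D 0 ∈ colorSet S.L := by
      rw [hDval_le 0 (by omega), hc0]
      exact hβΓ
    have hSE' : IsSE S.G S.r S.L S.p (shiftFun (k+1) W E S.f) :=
      isSE_shift_path hm1 hDinj hWmem hEval_lt hEinjh S.hSE hLWh hNbrh hEmD
        hfullD0 hlightEm hD0Γ
    have hWadj : ∀ j, 1 ≤ j → j < k+1 → ¬ S.G.Adj (W j) (W (j-1)) := by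
      intro j h1 h2 hadj
      have hj1 : j - 1 < k := by omega
      rw [hWval_lt (j-1) hj1] at hadj
      have hmv := hXmov (j-1) hj1
      have hj2 : (j-1)+1 = j := by omega
      rw [hj2] at hmv
      have hWj : W j ∈ classOf S.p S.f (c j) := by
        have := hWmem j (by omega)
        rwa [hDval_le j (by omega)] at this
      exact hmv.2 (W j) hWj hadj.symm
    have harc' := arc_shift_path hm1 hDinj hWmem hEval_lt hEinjh S.hSE hNbrh hEmD hWadj
    have harclast : Arc S.G S.L S.p (shiftFun (k+1) W E S.f) (E (k+1)) (D 0) := by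
      refine arc_shift_path_last hm1 hDinj hWmem hEval_lt hEinjh S.hSE hEmD ?_ ?_
      · rw [hDval_le 0 (by omega), hc0, hWval_m]
        exact hmov.1
      · rw [hDval_le 0 (by omega), hc0, hWval_m]
        exact hmov.2
    have hcard0 : (classOf S.p (shiftFun (k+1) W E S.f) (D 0)).card < S.s := by
      rw [card_class'_path_D0 hm1 hDinj hWmem hEval_lt hEinjh hEmD, hfullD0]
      have : S.s = sVal V S.r := rfl
      omega
    have haccD0 : Accessible S.G S.L S.p (shiftFun (k+1) W E S.f) S.s (D 0) :=
      ⟨hD0Γ, D 0, hD0Γ, Relation.ReflTransGen.refl, hcard0⟩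
    have hdown : ∀ j ≤ k+1, Relation.ReflTransGen
        (Arc S.G S.L S.p (shiftFun (k+1) W E S.f)) (D j) (D 0) := by
      intro j
      induction j with
      | zero => exact fun _ => Relation.ReflTransGen.refl
      | succ n ih =>
        intro hn
        have h3 := harc' n (by omega)
        rw [hEval_lt n (by omega)] at h3
        exact Relation.ReflTransGen.head h3 (ih (by omega))
    have haccΛ' : ∀ γ ∈ lamSet S.G S.L S.p S.f S.s,
        Accessible S.G S.L S.p (shiftFun (k+1) W E S.f) S.s γ := by
      intro γ hγ
      have hγΓ : γ ∈ colorSet S.L := (Finset.mem_filter.mp hγ).1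
      by_cases h1 : γ = S.f z
      · subst h1
        refine ⟨hγΓ, D 0, hD0Γ, ?_, hcard0⟩
        have := hdown (k+1) le_rfl
        rwa [hDval_m] at this
      by_cases h2 : γ = μ
      · subst h2
        refine ⟨hγΓ, D 0, hD0Γ, ?_, hcard0⟩
        have h3 := harclast
        rw [hEval_m] at h3
        exact Relation.ReflTransGen.head h3 Relation.ReflTransGen.refl
      · have hγD : ∀ j ≤ k+1, γ ≠ D j := by
          intro j hj h
          by_cases h3 : j = k+1
          · subst h3
            rw [hDval_m] at h
            exact h1 h
          · rw [hDval_le j (by omega)] at h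
            exact (hcnlam j (by omega)) (h ▸ hγ)
        have hγE : ∀ j ≤ k+1, γ ≠ E j := by
          intro j hj h
          by_cases h3 : j = k+1
          · subst h3
            rw [hEval_m] at h
            exact h2 h
          · rw [hEval_lt j (by omega)] at h
            exact hγD (j+1) (by omega) h
        have huntouch := class'_untouched hDinj hWmem hEval_lt hEinjh hγD hγE
        refine ⟨hγΓ, γ, hγΓ, Relation.ReflTransGen.refl, ?_⟩
        rw [huntouch]
        exact hlight_lam γ hγ h1
    have hsubΛ : lamSet S.G S.L S.p S.f S.s ⊆
        lamSet S.G S.L S.p (shiftFun (k+1) W E S.f) S.s := by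
      intro γ hγ
      exact Finset.mem_filter.mpr ⟨(Finset.mem_filter.mp hγ).1, haccΛ' γ hγ⟩
    -- counting
    have hβnΛ : β ∉ lamSet S.G S.L S.p S.f S.s := hβ'.2
    have hsumges : (aSet S.G S.L S.p (shiftFun (k+1) W E S.f) S.s).card ≥
        (aSet S.G S.L S.p S.f S.s).card + 1 := by
      rw [card_aSet_eq_sum, card_aSet_eq_sum]
      have hstep1 : ∑ γ ∈ lamSet S.G S.L S.p S.f S.s,
          (classOf S.p (shiftFun (k+1) W E S.f) γ).card ≤
          ∑ γ ∈ lamSet S.G S.L S.p (shiftFun (k+1) W E S.f) S.s,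
          (classOf S.p (shiftFun (k+1) W E S.f) γ).card :=
        Finset.sum_le_sum_of_subset hsubΛ
      have hstep2 : ∑ γ ∈ lamSet S.G S.L S.p S.f S.s,
          (classOf S.p (shiftFun (k+1) W E S.f) γ).card =
          ∑ γ ∈ lamSet S.G S.L S.p S.f S.s, (classOf S.p S.f γ).card + 1 := by
        rw [← Finset.sum_erase_add _ _ hμΛ, ← Finset.sum_erase_add _ _ hμΛ]
        have hcongr : ∑ γ ∈ (lamSet S.G S.L S.p S.f S.s).erase μ,
            (classOf S.p (shiftFun (k+1) W E S.f) γ).card =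
            ∑ γ ∈ (lamSet S.G S.L S.p S.f S.s).erase μ, (classOf S.p S.f γ).card := by
          apply Finset.sum_congr rfl
          intro γ hγ
          obtain ⟨hγμ, hγΛ⟩ := Finset.mem_erase.mp hγ
          have hγβ : γ ≠ D 0 := by
            rw [hDval_le 0 (by omega), hc0]
            intro h
            exact hβnΛ (h ▸ hγΛ)
          have hγEm : γ ≠ E (k+1) := by
            rw [hEval_m]
            exact hγμ
          exact card_class'_path_other hm1 hDinj hWmem hEval_lt hEinjh hEmD hγβ hγEm
        have hμbump : (classOf S.p (shiftFun (k+1) W E S.f) μ).card =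
            (classOf S.p S.f μ).card + 1 := by
          rw [← hEval_m]
          exact card_class'_path_Em hm1 hDinj hWmem hEval_lt hEinjh hEmD
        rw [hcongr, hμbump]
        omega
      omega
    have hO1app := hO1 (shiftFun (k+1) W E S.f) hSE'
    have hAeq : S.A.card = (aSet S.G S.L S.p S.f S.s).card := rfl
    omega
  · -- Case not-A : cyclic shift
    obtain ⟨D, W, E, hDval_0, hDval_pos, hEval_lt, hEval_m, hWval_0, hWval_mid, hWval_m⟩ :
        ∃ (D : ℕ → ℕ) (W : ℕ → V) (E : ℕ → ℕ),
          D 0 = S.f z ∧ (∀ j, 1 ≤ j → D j = c (j-1)) ∧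
          (∀ j, j < k+1 → E j = D (j+1)) ∧ E (k+1) = S.f z ∧
          W 0 = z ∧ (∀ j, 1 ≤ j → j < k+1 → W j = X (j-1)) ∧ W (k+1) = y := by
      refine ⟨fun j => if j = 0 then S.f z else c (j-1),
        fun j => if j = 0 then z else if j = k+1 then y else X (j-1),
        fun j => if j = k+1 then S.f z else c j,
        if_pos rfl,
        fun j hj => if_neg (by omega),
        ?_,
        if_pos rfl,
        if_pos rfl,
        fun j h1 h2 => (if_neg (by omega)).trans (if_neg (by omega)),
        (if_neg (by omega)).trans (if_pos rfl)⟩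
      intro j hj
      exact (if_neg (by omega)).trans ((if_neg (by omega)).trans (by norm_num)).symm
    have hcyc : E (k+1) = D 0 := by rw [hEval_m, hDval_0]
    have hDinj : ∀ i ≤ k+1, ∀ j ≤ k+1, D i = D j → i = j := by
      intro i hi j hj hij
      by_cases h1 : i = 0 <;> by_cases h2 : j = 0
      · omega
      · subst h1
        rw [hDval_0, hDval_pos j (by omega)] at hij
        exact absurd hij.symm (hcnefz (j-1) (by omega))
      · subst h2
        rw [hDval_0, hDval_pos i (by omega)] at hij
        exact absurd hij (hcnefz (i-1) (by omega))
      · rw [hDval_pos i (by omega), hDval_pos j (by omega)] at hij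
        have := hcinj (i-1) (by omega) (j-1) (by omega) hij
        omega
    have hWmem : ∀ j ≤ k+1, W j ∈ classOf S.p S.f (D j) := by
      intro j hj
      by_cases h1 : j = 0
      · subst h1
        rw [hWval_0, hDval_0]
        exact hzclsfz
      by_cases h2 : j = k+1
      · subst h2
        rw [hWval_m, hDval_pos (k+1) (by omega)]
        have : k + 1 - 1 = k := by omega
        rw [this, hck]
        exact mem_classOf.mpr ⟨hyp, rfl⟩
      · rw [hWval_mid j (by omega) (by omega), hDval_pos j (by omega)]
        exact hXcls (j-1) (by omega)
    have hEinjh : ∀ i ≤ k+1, ∀ j ≤ k+1, E i = E j → i = j := by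
      intro i hi j hj hij
      by_cases h1 : i = k+1 <;> by_cases h2 : j = k+1
      · omega
      · subst h1
        rw [hEval_m, hEval_lt j (by omega), hDval_pos (j+1) (by omega)] at hij
        exact absurd hij.symm (hcnefz (j+1-1) (by omega))
      · subst h2
        rw [hEval_m, hEval_lt i (by omega), hDval_pos (i+1) (by omega)] at hij
        exact absurd hij (hcnefz (i+1-1) (by omega))
      · rw [hEval_lt i (by omega), hEval_lt j (by omega)] at hij
        have := hDinj (i+1) (by omega) (j+1) (by omega) hij
        omega
    have hLWh : ∀ j ≤ k+1, E j ∈ S.L (W j) := by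
      intro j hj
      by_cases h1 : j = 0
      · subst h1
        rw [hEval_lt 0 (by omega), hDval_pos 1 (by omega), hWval_0]
        have : (1:ℕ) - 1 = 0 := rfl
        rw [this, hc0]
        exact hmov.1
      by_cases h2 : j = k+1
      · subst h2
        rw [hEval_m, hWval_m]
        exact hfzLy
      · rw [hEval_lt j (by omega), hDval_pos (j+1) (by omega),
          hWval_mid j (by omega) (by omega)]
        have h3 : j + 1 - 1 = (j-1) + 1 := by omega
        rw [h3]
        exact (hXmov (j-1) (by omega)).1
    have hNbrh : ∀ j ≤ k+1, ∀ w ∈ classOf S.p S.f (E j),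
        (∀ i ≤ k+1, w ≠ W i) → ¬ S.G.Adj (W j) w := by
      intro j hj w hw hwW
      by_cases h1 : j = 0
      · subst h1
        rw [hEval_lt 0 (by omega), hDval_pos 1 (by omega), show (1:ℕ)-1 = 0 from rfl,
          hc0] at hw
        rw [hWval_0]
        exact hmov.2 w hw
      by_cases h2 : j = k+1
      · subst h2
        rw [hEval_m] at hw
        rw [hWval_m]
        intro hadj
        exact (hwW 0 (by omega)) (by rw [hWval_0]; exact hsoloy w hw hadj)
      · rw [hEval_lt j (by omega), hDval_pos (j+1) (by omega),
          show j+1-1 = (j-1)+1 from by omega] at hw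
        rw [hWval_mid j (by omega) (by omega)]
        exact (hXmov (j-1) (by omega)).2 w hw
    have hm1 : 0 < k + 1 := by omega
    have hSE' : IsSE S.G S.r S.L S.p (shiftFun (k+1) W E S.f) :=
      isSE_shift_cyc hm1 hDinj hWmem hEval_lt hEinjh S.hSE hLWh hNbrh hcyc
    -- description of the new class of f z
    have hclsfz' : classOf S.p (shiftFun (k+1) W E S.f) (S.f z) =
        insert y ((classOf S.p S.f (S.f z)).erase z) := by
      have h3 := class'_E_m_cyc hm1 hDinj hWmem hEval_lt hEinjh hcyc
      rw [hEval_m, hDval_0, hWval_m, hWval_0] at h3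
      exact h3
    -- f z is accessible for the new coloring
    have haccfz' : Accessible S.G S.L S.p (shiftFun (k+1) W E S.f) S.s (S.f z) := by
      by_cases hfzfull : (classOf S.p S.f (S.f z)).card = S.s
      · -- full case: use the first arc of an accessibility path for f z
        obtain ⟨_, δ, hδΓ, hp2, hδlight⟩ := hfzacc
        rcases Relation.ReflTransGen.cases_head hp2 with heq | ⟨ν, harcν, hpathν⟩
        · rw [← heq] at hδlight
          omega
        · obtain ⟨hneν, xh, hxhcls, hxhmov⟩ := harcν
          have hνΓ : ν ∈ colorSet S.L := mem_colorSet_of_mem hxhmov.1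
          have hνacc : Accessible S.G S.L S.p S.f S.s ν := ⟨hνΓ, δ, hδΓ, hpathν, hδlight⟩
          have hνΛ : ν ∈ lamSet S.G S.L S.p S.f S.s := Finset.mem_filter.mpr ⟨hνΓ, hνacc⟩
          have hxhz : xh ≠ z := by
            rintro rfl
            exact hA ⟨ν, hνΛ, Ne.symm hneν, hxhmov⟩
          have hνlight := hlight_lam ν hνΛ (Ne.symm hneν)
          have hνD : ∀ j ≤ k+1, ν ≠ D j := by
            intro j hj h
            by_cases h3 : j = 0
            · subst h3
              rw [hDval_0] at h
              exact hneν h.symm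
            · rw [hDval_pos j (by omega)] at h
              exact (hcnlam (j-1) (by omega)) (h ▸ hνΛ)
          have hνE : ∀ j ≤ k+1, ν ≠ E j := by
            intro j hj h
            by_cases h3 : j = k+1
            · subst h3
              rw [hEval_m] at h
              exact hneν h.symm
            · rw [hEval_lt j (by omega)] at h
              exact hνD (j+1) (by omega) h
          have hνuntouch := class'_untouched hDinj hWmem hEval_lt hEinjh hνD hνE
          have harcν' : Arc S.G S.L S.p (shiftFun (k+1) W E S.f) (S.f z) ν := by
            refine ⟨hneν, xh, ?_, hxhmov.1, ?_⟩
            · rw [hclsfz']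
              exact Finset.mem_insert_of_mem (Finset.mem_erase.mpr ⟨hxhz, hxhcls⟩)
            · intro w hw
              rw [hνuntouch] at hw
              exact hxhmov.2 w hw
          refine ⟨hfzΓ, ν, hνΓ, Relation.ReflTransGen.head harcν' Relation.ReflTransGen.refl, ?_⟩
          rw [hνuntouch]
          exact hνlight
      · -- light case
        refine ⟨hfzΓ, S.f z, hfzΓ, Relation.ReflTransGen.refl, ?_⟩
        rw [card_class'_cyc hm1 hDinj hWmem hEval_lt hEinjh hcyc]
        exact lt_of_le_of_ne (S.hSE.2.2.1 (S.f z)) hfzfull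
    -- the new color of y' gives a new accessible color
    have hy'cls' : y' ∈ classOf S.p (shiftFun (k+1) W E S.f) (shiftFun (k+1) W E S.f y') :=
      mem_classOf.mpr ⟨hy'p, rfl⟩
    have htprop : shiftFun (k+1) W E S.f y' ∈ colorSet S.L ∧
        shiftFun (k+1) W E S.f y' ∉ lamSet S.G S.L S.p S.f S.s ∧
        shiftFun (k+1) W E S.f y' ≠ S.f z := by
      by_cases hy'W : ∃ j, j ≤ k+1 ∧ y' = W j
      · obtain ⟨j, hj, hyW⟩ := hy'W
        have hj0 : j ≠ 0 := by
          intro h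
          subst h
          rw [hWval_0] at hyW
          exact hzy' hyW.symm
        have hjm : j ≠ k+1 := by
          intro h
          subst h
          rw [hWval_m] at hyW
          exact hy'ne hyW
        have ht : shiftFun (k+1) W E S.f y' = c j := by
          rw [hyW, shiftFun_apply_W hDinj hWmem hj, hEval_lt j (by omega),
            hDval_pos (j+1) (by omega)]
          simp only [Nat.add_sub_cancel]
        rw [ht]
        exact ⟨hcΓ j (by omega), hcnlam j (by omega), hcnefz j (by omega)⟩
      · have hnv : ∀ j ≤ k+1, y' ≠ W j := fun j hj hh => hy'W ⟨j, hj, hh⟩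
        have ht : shiftFun (k+1) W E S.f y' = S.f y' := shiftFun_apply_of hnv
        rw [ht]
        obtain ⟨h1, h2⟩ := Finset.mem_sdiff.mp hfy'Φ
        exact ⟨h1, h2, fun h => h2 (h ▸ hfzΛ)⟩
    have harct : Arc S.G S.L S.p (shiftFun (k+1) W E S.f)
        (shiftFun (k+1) W E S.f y') (S.f z) := by
      refine ⟨htprop.2.2, y', hy'cls', hfzLy', ?_⟩
      intro w hw
      rw [hclsfz'] at hw
      rcases Finset.mem_insert.mp hw with rfl | hw2
      · intro hadj
        exact hy'nadj hadj.symm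
      · obtain ⟨hwz, hwcls⟩ := Finset.mem_erase.mp hw2
        intro hadj
        exact hwz (hsoloy' w hwcls hadj)
    have hacct : Accessible S.G S.L S.p (shiftFun (k+1) W E S.f) S.s
        (shiftFun (k+1) W E S.f y') :=
      accessible_of_reflTransGen htprop.1
        (Relation.ReflTransGen.head harct Relation.ReflTransGen.refl) haccfz'
    have haccΛ' : ∀ γ ∈ lamSet S.G S.L S.p S.f S.s,
        Accessible S.G S.L S.p (shiftFun (k+1) W E S.f) S.s γ := by
      intro γ hγ
      have hγΓ : γ ∈ colorSet S.L := (Finset.mem_filter.mp hγ).1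
      by_cases h1 : γ = S.f z
      · subst h1
        exact haccfz'
      · have hγD : ∀ j ≤ k+1, γ ≠ D j := by
          intro j hj h
          by_cases h3 : j = 0
          · subst h3
            rw [hDval_0] at h
            exact h1 h
          · rw [hDval_pos j (by omega)] at h
            exact (hcnlam (j-1) (by omega)) (h ▸ hγ)
        have hγE : ∀ j ≤ k+1, γ ≠ E j := by
          intro j hj h
          by_cases h3 : j = k+1
          · subst h3
            rw [hEval_m] at h
            exact h1 h
          · rw [hEval_lt j (by omega)] at h
            exact hγD (j+1) (by omega) h
        have huntouch := class'_untouched hDinj hWmem hEval_lt hEinjh hγD hγE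
        refine ⟨hγΓ, γ, hγΓ, Relation.ReflTransGen.refl, ?_⟩
        rw [huntouch]
        exact hlight_lam γ hγ h1
    -- counting
    have hsubΛ : insert (shiftFun (k+1) W E S.f y') (lamSet S.G S.L S.p S.f S.s) ⊆
        lamSet S.G S.L S.p (shiftFun (k+1) W E S.f) S.s := by
      intro γ hγ
      rcases Finset.mem_insert.mp hγ with rfl | hγ2
      · exact Finset.mem_filter.mpr ⟨htprop.1, hacct⟩
      · exact Finset.mem_filter.mpr ⟨(Finset.mem_filter.mp hγ2).1, haccΛ' γ hγ2⟩
    have hsumges : (aSet S.G S.L S.p (shiftFun (k+1) W E S.f) S.s).card ≥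
        (aSet S.G S.L S.p S.f S.s).card + 1 := by
      rw [card_aSet_eq_sum, card_aSet_eq_sum]
      have hstep1 : ∑ γ ∈ insert (shiftFun (k+1) W E S.f y') (lamSet S.G S.L S.p S.f S.s),
          (classOf S.p (shiftFun (k+1) W E S.f) γ).card ≤
          ∑ γ ∈ lamSet S.G S.L S.p (shiftFun (k+1) W E S.f) S.s,
          (classOf S.p (shiftFun (k+1) W E S.f) γ).card :=
        Finset.sum_le_sum_of_subset hsubΛ
      rw [Finset.sum_insert htprop.2.1] at hstep1
      have hcongr : ∑ γ ∈ lamSet S.G S.L S.p S.f S.s,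
          (classOf S.p (shiftFun (k+1) W E S.f) γ).card =
          ∑ γ ∈ lamSet S.G S.L S.p S.f S.s, (classOf S.p S.f γ).card := by
        apply Finset.sum_congr rfl
        intro γ _
        exact card_class'_cyc hm1 hDinj hWmem hEval_lt hEinjh hcyc γ
      have hpos : 1 ≤ (classOf S.p (shiftFun (k+1) W E S.f)
          (shiftFun (k+1) W E S.f y')).card :=
        Finset.card_pos.mpr ⟨y', hy'cls'⟩
      omega
    have hO1app := hO1 (shiftFun (k+1) W E S.f) hSE'
    have hAeq : S.A.card = (aSet S.G S.L S.p S.f S.s).card := rfl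
    omega


end EqListColoring
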